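/- Let T be a tree with independence number α, let v be a vertex of T adjacent to at least two endvertices, and let T' be obtained from T by deleting v and all its children endvertex neighbors (i.e., deleting v together with its k ≥ 2 endvertex neighbors). Then every maximum independent set of T contains all those endvertices and does not contain v, and the number of maximum independent sets of T equals the number of maximum independent sets of T'. -/

import Mathlib

open SimpleGraph

/-- A set of vertices is independent if its vertices are pairwise non-adjacent. -/
def SimpleGraph.IsIndepSet' {V : Type*} (G : SimpleGraph V) (s : Set V) : Prop :=
  s.Pairwise (fun u v => ¬ G.Adj u v)

/-- The independence number of a graph. -/
noncomputable def indepNum {V : Type*} (G : SimpleGraph V) : ℕ :=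
  sSup {k | ∃ s : Finset V, G.IsIndepSet' ↑s ∧ s.card = k}

/-- The number of maximum independent sets of a graph. -/
noncomputable def numMaxIndep {V : Type*} (G : SimpleGraph V) : ℕ :=
  {s : Finset V | G.IsIndepSet' ↑s ∧ s.card = _root_.indepNum G}.ncard

lemma indep_bddAbove {V : Type*} [Finite V] (G : SimpleGraph V) :
    BddAbove {k | ∃ s : Finset V, G.IsIndepSet' ↑s ∧ s.card = k} := by
  cases nonempty_fintype V
  refine ⟨Fintype.card V, ?_⟩
  rintro k ⟨s, -, rfl⟩
  exact Finset.card_le_univ s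

lemma card_le_indepNum {V : Type*} [Finite V] (G : SimpleGraph V)
    {s : Finset V} (hs : G.IsIndepSet' ↑s) : s.card ≤ _root_.indepNum G :=
  le_csSup (indep_bddAbove G) ⟨s, hs, rfl⟩

lemma exists_max_indep {V : Type*} [Finite V] (G : SimpleGraph V) :
    ∃ s : Finset V, G.IsIndepSet' ↑s ∧ s.card = _root_.indepNum G := by
  have h0 : (0:ℕ) ∈ {k | ∃ s : Finset V, G.IsIndepSet' ↑s ∧ s.card = k} :=
    ⟨∅, by simp [SimpleGraph.IsIndepSet'], by simp⟩
  exact Nat.sSup_mem ⟨0, h0⟩ (indep_bddAbove G)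

theorem stmt18 {V : Type*} [Fintype V] (T : SimpleGraph V) (hT : T.IsTree) (v : V)
    (L : Set V) (hL : L = {u : V | T.Adj v u ∧ (T.neighborSet u).ncard = 1})
    (hk : 2 ≤ L.ncard) (hother : (T.neighborSet v \ L).ncard = 1) :
    (∀ s : Finset V, T.IsIndepSet' ↑s → s.card = _root_.indepNum T →
      (∀ u ∈ L, u ∈ s) ∧ v ∉ s) ∧
    numMaxIndep T = numMaxIndep (T.induce ({v} ∪ L)ᶜ) := by
  classical
  -- basic facts about L
  have hadj_L : ∀ u ∈ L, ∀ w, T.Adj u w → w = v := by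
    intro u hu w hw
    rw [hL] at hu
    obtain ⟨hadj, hcard⟩ := hu
    obtain ⟨a, ha⟩ := Set.ncard_eq_one.mp hcard
    have hv : v ∈ T.neighborSet u := hadj.symm
    have hw' : w ∈ T.neighborSet u := hw
    rw [ha] at hv hw'
    rw [Set.mem_singleton_iff] at hv hw'
    rw [hw', hv]
  have hvL : v ∉ L := by
    intro h
    rw [hL] at h
    exact T.loopless.irrefl v h.1
  have hvadj : ∀ u ∈ L, T.Adj v u := by
    intro u hu; rw [hL] at hu; exact hu.1
  have hLfin : L.Finite := Set.toFinite L
  set Lf : Finset V := hLfin.toFinset with hLfdef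
  have hLf_mem : ∀ x, x ∈ Lf ↔ x ∈ L := fun x => Set.Finite.mem_toFinset _
  have hLf_card : Lf.card = L.ncard := (Set.ncard_eq_toFinset_card L hLfin).symm
  -- Part 1
  have part1 : ∀ s : Finset V, T.IsIndepSet' ↑s → s.card = _root_.indepNum T →
      (∀ u ∈ L, u ∈ s) ∧ v ∉ s := by
    intro s hs hcard
    have hv : v ∉ s := by
      intro hvs
      have hdisj : Disjoint (s.erase v) Lf := by
        rw [Finset.disjoint_left]
        intro u hus hu
        have huL := (hLf_mem u).1 hu
        have hadj : T.Adj v u := hvadj u huL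
        have hne : u ≠ v := fun h => T.loopless.irrefl v (h ▸ hadj)
        exact hs (Finset.mem_coe.2 (Finset.mem_of_mem_erase hus))
          (Finset.mem_coe.2 hvs) hne hadj.symm
      set s' := s.erase v ∪ Lf with hs'def
      have hs' : T.IsIndepSet' ↑s' := by
        intro a ha b hb hab hadj
        have ha' := Finset.mem_union.1 (Finset.mem_coe.1 ha)
        have hb' := Finset.mem_union.1 (Finset.mem_coe.1 hb)
        have hnv : ∀ x, x ∈ s' → x ≠ v := by
          intro x hx hxv
          rcases Finset.mem_union.1 hx with h | h
          · exact Finset.ne_of_mem_erase h hxv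
          · exact hvL (hxv ▸ (hLf_mem x).1 h)
        rcases ha' with ha' | ha'
        · rcases hb' with hb' | hb'
          · exact hs (Finset.mem_coe.2 (Finset.mem_of_mem_erase ha'))
              (Finset.mem_coe.2 (Finset.mem_of_mem_erase hb')) hab hadj
          · exact hnv a (Finset.mem_coe.1 ha)
              (hadj_L b ((hLf_mem b).1 hb') a hadj.symm)
        · exact hnv b (Finset.mem_coe.1 hb)
            (hadj_L a ((hLf_mem a).1 ha') b hadj)
      have hcard' : s'.card = s.card - 1 + Lf.card := by
        rw [hs'def, Finset.card_union_of_disjoint hdisj, Finset.card_erase_of_mem hvs]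
      have h2 : 2 ≤ Lf.card := hLf_card ▸ hk
      have h1 : 1 ≤ s.card := Finset.card_pos.2 ⟨v, hvs⟩
      have hle := card_le_indepNum T hs'
      omega
    refine ⟨?_, hv⟩
    intro u hu
    by_contra hus
    set s' := insert u s with hs'def
    have hs' : T.IsIndepSet' ↑s' := by
      intro a ha b hb hab hadj
      have ha' := Finset.mem_insert.1 (Finset.mem_coe.1 ha)
      have hb' := Finset.mem_insert.1 (Finset.mem_coe.1 hb)
      rcases ha' with rfl | ha'
      · rcases hb' with rfl | hb'
        · exact hab rfl
        · exact hv ((hadj_L a hu b hadj) ▸ hb')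
      · rcases hb' with rfl | hb'
        · exact hv ((hadj_L b hu a hadj.symm) ▸ ha')
        · exact hs (Finset.mem_coe.2 ha') (Finset.mem_coe.2 hb') hab hadj
    have hle := card_le_indepNum T hs'
    rw [hs'def, Finset.card_insert_of_notMem hus] at hle
    omega
  refine ⟨part1, ?_⟩
  -- Part 2
  set W : Set V := ({v} ∪ L)ᶜ with hWdef
  have hWmem : ∀ x, x ∈ W ↔ (x ≠ v ∧ x ∉ L) := by
    intro x
    simp [hWdef, not_or]
  set G' := T.induce W with hG'def
  have hG'adj : ∀ a b : ↥W, G'.Adj a b ↔ T.Adj ↑a ↑b := by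
    intro a b; simp [hG'def]
  -- lifting
  have lift_indep : ∀ t : Finset ↥W, G'.IsIndepSet' ↑t →
      T.IsIndepSet' ↑(t.image Subtype.val ∪ Lf) := by
    intro t ht a ha b hb hab hadj
    have ha' := Finset.mem_union.1 (Finset.mem_coe.1 ha)
    have hb' := Finset.mem_union.1 (Finset.mem_coe.1 hb)
    rcases ha' with ha' | ha'
    · obtain ⟨a', ha2, rfl⟩ := Finset.mem_image.1 ha'
      rcases hb' with hb' | hb'
      · obtain ⟨b', hb2, rfl⟩ := Finset.mem_image.1 hb'
        exact ht (Finset.mem_coe.2 ha2) (Finset.mem_coe.2 hb2)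
          (fun h => hab (congrArg Subtype.val h)) ((hG'adj a' b').2 hadj)
      · have := hadj_L b ((hLf_mem b).1 hb') _ hadj.symm
        exact (((hWmem _).1 a'.2).1) this
    · have haL := (hLf_mem a).1 ha'
      rcases hb' with hb' | hb'
      · obtain ⟨b', hb2, rfl⟩ := Finset.mem_image.1 hb'
        exact (((hWmem _).1 b'.2).1) (hadj_L a haL _ hadj)
      · exact hvL ((hadj_L a haL b hadj) ▸ (hLf_mem b).1 hb')
  have himg_disj : ∀ t : Finset ↥W, Disjoint (t.image Subtype.val) Lf := by
    intro t
    rw [Finset.disjoint_left]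
    rintro x hx hxL
    obtain ⟨x', _, rfl⟩ := Finset.mem_image.1 hx
    exact ((hWmem _).1 x'.2).2 ((hLf_mem _).1 hxL)
  have lift_card : ∀ t : Finset ↥W, (t.image Subtype.val ∪ Lf).card = t.card + Lf.card := by
    intro t
    rw [Finset.card_union_of_disjoint (himg_disj t),
      Finset.card_image_of_injective _ Subtype.val_injective]
  -- restriction
  have restr_indep : ∀ s : Finset V, T.IsIndepSet' ↑s →
      G'.IsIndepSet' ↑(s.subtype (· ∈ W)) := by
    intro s hs a ha b hb hab hadj
    have ha' := Finset.mem_subtype.1 (Finset.mem_coe.1 ha)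
    have hb' := Finset.mem_subtype.1 (Finset.mem_coe.1 hb)
    exact hs (Finset.mem_coe.2 ha') (Finset.mem_coe.2 hb')
      (fun h => hab (Subtype.ext h)) ((hG'adj a b).1 hadj)
  have restr_filter : ∀ s : Finset V, v ∉ s → (∀ u ∈ L, u ∈ s) →
      s.filter (· ∈ W) = s \ Lf := by
    intro s hv hLs
    ext x
    simp only [Finset.mem_filter, Finset.mem_sdiff]
    constructor
    · rintro ⟨hxs, hxW⟩
      exact ⟨hxs, fun h => ((hWmem x).1 hxW).2 ((hLf_mem x).1 h)⟩
    · rintro ⟨hxs, hxL⟩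
      refine ⟨hxs, (hWmem x).2 ⟨fun h => hv (h ▸ hxs), fun h => hxL ((hLf_mem x).2 h)⟩⟩
  have hLf_sub : ∀ s : Finset V, (∀ u ∈ L, u ∈ s) → Lf ⊆ s := by
    intro s h x hx; exact h x ((hLf_mem x).1 hx)
  have restr_card : ∀ s : Finset V, v ∉ s → (∀ u ∈ L, u ∈ s) →
      (s.subtype (· ∈ W)).card = s.card - Lf.card := by
    intro s h1 h2
    rw [Finset.card_subtype, restr_filter s h1 h2, Finset.card_sdiff_of_subset (hLf_sub s h2)]
  -- alpha relation
  have halpha : _root_.indepNum T = _root_.indepNum G' + Lf.card := by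
    obtain ⟨s, hs, hsc⟩ := exists_max_indep T
    obtain ⟨t, ht, htc⟩ := exists_max_indep G'
    obtain ⟨hLs, hvs⟩ := part1 s hs hsc
    have h1 : _root_.indepNum G' + Lf.card ≤ _root_.indepNum T := by
      have := card_le_indepNum T (lift_indep t ht)
      rw [lift_card t, htc] at this
      exact this
    have h2 : _root_.indepNum T ≤ _root_.indepNum G' + Lf.card := by
      have h3 := card_le_indepNum G' (restr_indep s hs)
      rw [restr_card s hvs hLs] at h3
      have h4 : Lf.card ≤ s.card := Finset.card_le_card (hLf_sub s hLs)
      omega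
    omega
  -- bijection
  set F : Finset ↥W → Finset V := fun t => t.image Subtype.val ∪ Lf with hFdef
  have hF_filter : ∀ t : Finset ↥W, (F t).filter (· ∈ W) = t.image Subtype.val := by
    intro t
    ext x
    simp only [hFdef, Finset.mem_filter, Finset.mem_union]
    constructor
    · rintro ⟨h | h, hxW⟩
      · exact h
      · exact absurd ((hLf_mem x).1 h) ((hWmem x).1 hxW).2
    · intro h
      obtain ⟨x', _, rfl⟩ := Finset.mem_image.1 h
      exact ⟨Or.inl h, x'.2⟩
  have hF_inj : Function.Injective F := by
    intro t1 t2 h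
    have h2 : t1.image Subtype.val = t2.image Subtype.val := by
      rw [← hF_filter t1, ← hF_filter t2, h]
    exact Finset.image_injective Subtype.val_injective h2
  have hset : {s : Finset V | T.IsIndepSet' ↑s ∧ s.card = _root_.indepNum T}
      = F '' {t : Finset ↥W | G'.IsIndepSet' ↑t ∧ t.card = _root_.indepNum G'} := by
    ext s
    simp only [Set.mem_setOf_eq, Set.mem_image]
    constructor
    · rintro ⟨hs, hsc⟩
      obtain ⟨hLs, hvs⟩ := part1 s hs hsc
      refine ⟨s.subtype (· ∈ W), ⟨restr_indep s hs, ?_⟩, ?_⟩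
      · rw [restr_card s hvs hLs, hsc, halpha]
        omega
      · have himg : (s.subtype (· ∈ W)).image Subtype.val = s.filter (· ∈ W) := by
          rw [← Finset.subtype_map (· ∈ W), Finset.map_eq_image]
          rfl
        rw [hFdef]
        simp only
        rw [himg, restr_filter s hvs hLs, Finset.sdiff_union_of_subset (hLf_sub s hLs)]
    · rintro ⟨t, ⟨ht, htc⟩, rfl⟩
      refine ⟨lift_indep t ht, ?_⟩
      rw [hFdef]
      simp only
      rw [lift_card t, htc, halpha]
  rw [numMaxIndep, numMaxIndep, hset, Set.ncard_image_of_injective _ hF_inj]
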